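/- arXiv:1603.08938 — 2 statements merged into one kernel-verified Lean document; each statement's English description precedes it below -/
import Mathlib

section
/- Let k be a field and 𝒜 a finite-dimensional category. Then every finitely generated object V of Mod-𝒜 has a projective cover: there exist a finitely generated projective object P of Mod-𝒜 and an epimorphism p : P → V whose kernel is a superfluous subobject of P. -/
open CategoryTheory CategoryTheory.Limits Opposite

section
variable (k : Type) [Field k]

/-- `k`-linearity on the opposite category. -/
instance oppositeLinear (C : Type*) [Category C] [Preadditive C] [CategoryTheory.Linear k C] :
    CategoryTheory.Linear k Cᵒᵖ where
  homModule X Y := Equiv.module k (opEquiv X Y)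
  smul_comp _ _ _ _ _ _ :=
    Quiver.Hom.unop_inj (CategoryTheory.Linear.comp_smul _ _ _ _ _ _)
  comp_smul _ _ _ _ _ _ :=
    Quiver.Hom.unop_inj (CategoryTheory.Linear.smul_comp _ _ _ _ _ _)

@[simp] lemma unop_ksmul {C : Type*} [Category C] [Preadditive C]
    [CategoryTheory.Linear k C] {X Y : Cᵒᵖ} (r : k) (f : X ⟶ Y) :
    (r • f).unop = r • f.unop := rfl

/-- The property of a functor between `k`-linear categories being `k`-linear
(in particular additive). -/
def IsKLinear {C D : Type*} [Category C] [Category D] [Preadditive C] [Preadditive D]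
    [CategoryTheory.Linear k C] [CategoryTheory.Linear k D] (F : C ⥤ D) : Prop :=
  ∃ _h : F.Additive, Functor.Linear k F

/-- The category `Mod-A` of right modules over a small `k`-linear category `A`:
`k`-linear functors `Aᵒᵖ ⥤ ModuleCat k`. -/
abbrev RMod (A : Type) [SmallCategory A] [Preadditive A] [CategoryTheory.Linear k A] :=
  ObjectProperty.FullSubcategory (fun F : Aᵒᵖ ⥤ ModuleCat.{0} k => IsKLinear k F)

/-- The category `A-Mod` of left modules over a small `k`-linear category `A`:
`k`-linear functors `A ⥤ ModuleCat k`. -/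
abbrev LMod (A : Type) [SmallCategory A] [Preadditive A] [CategoryTheory.Linear k A] :=
  ObjectProperty.FullSubcategory (fun F : A ⥤ ModuleCat.{0} k => IsKLinear k F)

variable {k}

instance linYonObjLinear {C : Type*} [Category C] [Preadditive C] [CategoryTheory.Linear k C]
    (x : C) : ((linearYoneda k C).obj x).Linear k where
  map_smul f r := by
    ext (g : _ ⟶ x)
    exact CategoryTheory.Linear.smul_comp _ _ _ _ _ _

instance linCoyonObjLinear {C : Type*} [Category C] [Preadditive C] [CategoryTheory.Linear k C]
    (x : Cᵒᵖ) : ((linearCoyoneda k C).obj x).Linear k where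
  map_smul f r := by
    ext (g : x.unop ⟶ _)
    exact CategoryTheory.Linear.comp_smul _ _ _ _ _ _

variable (k)
variable (A : Type) [SmallCategory A] [Preadditive A] [CategoryTheory.Linear k A]

/-- The representable right `A`-module `Hom_A(−, x)`. -/
def reprR (x : A) : RMod k A :=
  ⟨(linearYoneda k A).obj x, inferInstance, inferInstance⟩

/-- The representable left `A`-module `Hom_A(x, −)`. -/
def reprL (x : A) : LMod k A :=
  ⟨(linearCoyoneda k A).obj (op x), inferInstance, inferInstance⟩

/-- The underlying functor of a finite direct sum of representable right modules. -/
def sumReprRFunctor {n : ℕ} (x : Fin n → A) : Aᵒᵖ ⥤ ModuleCat.{0} k where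
  obj y := ModuleCat.of k (∀ i, y.unop ⟶ x i)
  map {y z} f := ModuleCat.ofHom
    (LinearMap.pi fun i =>
      (CategoryTheory.Linear.leftComp k (x i) f.unop).comp (LinearMap.proj i))
  map_id y := by
    apply ModuleCat.hom_ext
    apply LinearMap.ext
    intro g
    funext i
    simp
  map_comp f g := by
    apply ModuleCat.hom_ext
    apply LinearMap.ext
    intro h
    funext i
    simp

instance sumReprRFunctor_additive {n : ℕ} (x : Fin n → A) :
    (sumReprRFunctor k A x).Additive where
  map_add {y z f g} := by
    apply ModuleCat.hom_ext
    apply LinearMap.ext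
    intro h
    funext i
    show (f.unop + g.unop) ≫ h i = f.unop ≫ h i + g.unop ≫ h i
    exact Preadditive.add_comp _ _ _ _ _ _

instance sumReprRFunctor_linear {n : ℕ} (x : Fin n → A) :
    (sumReprRFunctor k A x).Linear k where
  map_smul {y z} f r := by
    apply ModuleCat.hom_ext
    apply LinearMap.ext
    intro h
    funext i
    show (r • f.unop) ≫ h i = r • (f.unop ≫ h i)
    exact CategoryTheory.Linear.smul_comp _ _ _ _ _ _

/-- The finite direct sum of the representable right modules `Hom_A(−, x i)`. -/
def sumReprR {n : ℕ} (x : Fin n → A) : RMod k A :=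
  ⟨sumReprRFunctor k A x, inferInstance, inferInstance⟩

/-- A right module is finitely generated if it admits an epimorphism from a finite
direct sum of representable modules. -/
def RMod.IsFG (V : RMod k A) : Prop :=
  ∃ (n : ℕ) (x : Fin n → A) (p : sumReprR k A x ⟶ V), Epi p

variable {k A}

/-- A monomorphism `s : S ⟶ P` is a superfluous subobject of `P` if the only
subobject `t : T ⟶ P` with `S ⊔ T = P` is `P` itself; here `S ⊔ T = P` is expressed
by saying that `s` and `t` are jointly epimorphic, and `T = P` as a subobject means
that `t` is an isomorphism. -/
def IsSuperfluous {C : Type*} [Category C] {S P : C} (s : S ⟶ P) : Prop :=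
  ∀ (T : C) (t : T ⟶ P), Mono t →
    (∀ (W : C) (g h : P ⟶ W), s ≫ g = s ≫ h → t ≫ g = t ≫ h → g = h) →
    IsIso t

/-- `ι : K ⟶ P` is a kernel of `p : P ⟶ V`. -/
def IsKernelOf {C : Type*} [Category C] [Preadditive C] {K P V : C}
    (ι : K ⟶ P) (p : P ⟶ V) : Prop :=
  Mono ι ∧ ι ≫ p = 0 ∧
    ∀ (T : C) (t : T ⟶ P), t ≫ p = 0 → ∃! u : T ⟶ K, u ≫ ι = t

namespace Statement10

variable {k : Type} [Field k] {A : Type} [SmallCategory A] [Preadditive A]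
  [CategoryTheory.Linear k A]

lemma hom_ext' {X Y : RMod k A} {f g : X ⟶ Y} (h : ∀ (y : Aᵒᵖ) v, (f.hom.app y).hom v = (g.hom.app y).hom v) :
    f = g := by
  apply InducedCategory.hom_ext
  apply NatTrans.ext
  funext y
  apply ModuleCat.hom_ext
  exact LinearMap.ext (h y)

lemma nat_apply {X Y : RMod k A} (f : X ⟶ Y) {y z : Aᵒᵖ} (u : y ⟶ z) (v : X.obj.obj y) :
    (f.hom.app z).hom (X.obj.map u v) = Y.obj.map u ((f.hom.app y).hom v) :=
  LinearMap.congr_fun (congrArg ModuleCat.Hom.hom (f.hom.naturality u)) v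

lemma comp_app' {X Y Z : RMod k A} (f : X ⟶ Y) (g : Y ⟶ Z) (y : Aᵒᵖ) (v : X.obj.obj y) :
    ((f ≫ g).hom.app y).hom v = (g.hom.app y).hom ((f.hom.app y).hom v) := rfl

/-- The subfunctor of `X` determined by a family of submodules stable under the maps. -/
def subFunctorF (X : RMod k A) (S : ∀ y : Aᵒᵖ, Submodule k (X.obj.obj y))
    (hS : ∀ {y z : Aᵒᵖ} (f : y ⟶ z), ∀ v ∈ S y, X.obj.map f v ∈ S z) :
    Aᵒᵖ ⥤ ModuleCat.{0} k where
  obj y := ModuleCat.of k (S y)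
  map {y z} f := ModuleCat.ofHom ((X.obj.map f).hom.restrict (fun v hv => hS f v hv))
  map_id y := by
    apply ModuleCat.hom_ext; apply LinearMap.ext; intro v
    apply Subtype.ext
    show X.obj.map (𝟙 y) v.1 = v.1
    rw [X.obj.map_id]; rfl
  map_comp {y z w} f g := by
    apply ModuleCat.hom_ext; apply LinearMap.ext; intro v
    apply Subtype.ext
    show X.obj.map (f ≫ g) v.1 = X.obj.map g (X.obj.map f v.1)
    rw [X.obj.map_comp]; rfl

lemma subFunctorF_isKLinear (X : RMod k A) (S : ∀ y : Aᵒᵖ, Submodule k (X.obj.obj y))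
    (hS : ∀ {y z : Aᵒᵖ} (f : y ⟶ z), ∀ v ∈ S y, X.obj.map f v ∈ S z) :
    IsKLinear k (subFunctorF X S hS) := by
  obtain ⟨ha, hl⟩ := X.property
  have hAdd : (subFunctorF X S hS).Additive := by
    constructor
    intro y z f g
    apply ModuleCat.hom_ext; apply LinearMap.ext; intro v
    apply Subtype.ext
    show X.obj.map (f + g) v.1 = X.obj.map f v.1 + X.obj.map g v.1
    rw [ha.map_add]; rfl
  haveI := hAdd
  have hLin : Functor.Linear k (subFunctorF X S hS) := by
    constructor
    intro y z f r
    apply ModuleCat.hom_ext; apply LinearMap.ext; intro v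
    apply Subtype.ext
    show X.obj.map (r • f) v.1 = r • (X.obj.map f v.1)
    rw [hl.map_smul]; rfl
  exact ⟨hAdd, hLin⟩

/-- The subfunctor as an object of `RMod`. -/
def subMod (X : RMod k A) (S : ∀ y : Aᵒᵖ, Submodule k (X.obj.obj y))
    (hS : ∀ {y z : Aᵒᵖ} (f : y ⟶ z), ∀ v ∈ S y, X.obj.map f v ∈ S z) : RMod k A :=
  ⟨subFunctorF X S hS, subFunctorF_isKLinear X S hS⟩

/-- The inclusion of a subfunctor. -/
def subIncl (X : RMod k A) (S : ∀ y : Aᵒᵖ, Submodule k (X.obj.obj y))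
    (hS : ∀ {y z : Aᵒᵖ} (f : y ⟶ z), ∀ v ∈ S y, X.obj.map f v ∈ S z) :
    subMod X S hS ⟶ X where
  hom.app y := ModuleCat.ofHom (S y).subtype
  hom.naturality {y z} f := by
    apply ModuleCat.hom_ext; apply LinearMap.ext; intro v
    rfl

lemma subIncl_app (X : RMod k A) (S : ∀ y : Aᵒᵖ, Submodule k (X.obj.obj y))
    (hS : ∀ {y z : Aᵒᵖ} (f : y ⟶ z), ∀ v ∈ S y, X.obj.map f v ∈ S z) (y : Aᵒᵖ)
    (v : (subMod X S hS).obj.obj y) : ((subIncl X S hS).hom.app y).hom v = v.1 := rfl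

lemma mono_subIncl (X : RMod k A) (S : ∀ y : Aᵒᵖ, Submodule k (X.obj.obj y))
    (hS : ∀ {y z : Aᵒᵖ} (f : y ⟶ z), ∀ v ∈ S y, X.obj.map f v ∈ S z) :
    Mono (subIncl X S hS) := by
  constructor
  intro Z u v h
  apply hom_ext'
  intro y w
  apply Subtype.ext
  calc ((u.hom.app y).hom w).1 = ((u ≫ subIncl X S hS).hom.app y).hom w := rfl
    _ = ((v ≫ subIncl X S hS).hom.app y).hom w := by rw [h]
    _ = ((v.hom.app y).hom w).1 := rfl

end Statement10
namespace Statement10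

variable {k : Type} [Field k] {A : Type} [SmallCategory A] [Preadditive A]
  [CategoryTheory.Linear k A]

section Ker

variable {X Y : RMod k A} (φ : X ⟶ Y)

lemma ker_stable {y z : Aᵒᵖ} (f : y ⟶ z) :
    ∀ v ∈ LinearMap.ker ((φ.hom.app y).hom), X.obj.map f v ∈ LinearMap.ker ((φ.hom.app z).hom) := by
  intro v hv
  have : (φ.hom.app z).hom (X.obj.map f v) = Y.obj.map f ((φ.hom.app y).hom v) := nat_apply φ f v
  rw [LinearMap.mem_ker] at hv ⊢
  rw [this, hv, map_zero]

/-- The kernel of a morphism of right modules. -/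
def kerMod : RMod k A := subMod X (fun y => LinearMap.ker ((φ.hom.app y).hom)) (ker_stable φ)

/-- The inclusion of the kernel. -/
def kerIncl : kerMod φ ⟶ X := subIncl _ _ _

lemma kerMod_isKernelOf : IsKernelOf (kerIncl φ) φ := by
  refine ⟨mono_subIncl _ _ _, ?_, ?_⟩
  · apply hom_ext'
    intro y v
    exact v.2
  · intro T t ht
    refine ⟨⟨{ app := fun y => ModuleCat.ofHom (LinearMap.codRestrict _ ((t.hom.app y).hom)
        (fun w => ?_)), naturality := ?_ }⟩, ?_, ?_⟩
    · have : ((t ≫ φ).hom.app y).hom w = ((0 : T ⟶ Y).hom.app y).hom w := by rw [ht]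
      exact this
    · intro y z f
      apply ModuleCat.hom_ext; apply LinearMap.ext; intro w
      apply Subtype.ext
      exact nat_apply t f w
    · apply hom_ext'
      intro y w
      rfl
    · intro u hu
      apply hom_ext'
      intro y w
      apply Subtype.ext
      calc ((u.hom.app y).hom w).1 = ((u ≫ kerIncl φ).hom.app y).hom w := rfl
        _ = (t.hom.app y).hom w := by rw [hu]

end Ker

section Split

variable {X : RMod k A} (e : X ⟶ X)

lemma range_stable {y z : Aᵒᵖ} (f : y ⟶ z) :
    ∀ v ∈ LinearMap.range ((e.hom.app y).hom), X.obj.map f v ∈ LinearMap.range ((e.hom.app z).hom) := by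
  rintro v ⟨w, rfl⟩
  exact ⟨X.obj.map f w, nat_apply e f w⟩

/-- The image of an endomorphism, as a right module. -/
def imMod : RMod k A := subMod X (fun y => LinearMap.range ((e.hom.app y).hom)) (range_stable e)

/-- Inclusion of the image. -/
def imIncl : imMod e ⟶ X := subIncl _ _ _

/-- Projection onto the image. -/
def imProj : X ⟶ imMod e where
  hom.app y := ModuleCat.ofHom (LinearMap.codRestrict _ ((e.hom.app y).hom) (fun w => ⟨w, rfl⟩))
  hom.naturality {y z} f := by
    apply ModuleCat.hom_ext; apply LinearMap.ext; intro w
    apply Subtype.ext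
    exact nat_apply e f w

lemma imProj_incl : imProj e ≫ imIncl e = e := by
  apply hom_ext'
  intro y v
  rfl

lemma imIncl_proj (he : e ≫ e = e) : imIncl e ≫ imProj e = 𝟙 (imMod e) := by
  apply hom_ext'
  intro y v
  apply Subtype.ext
  obtain ⟨v, w, rfl⟩ := v
  show (e.hom.app y).hom ((e.hom.app y).hom w) = (e.hom.app y).hom w
  calc (e.hom.app y).hom ((e.hom.app y).hom w) = ((e ≫ e).hom.app y).hom w := rfl
    _ = (e.hom.app y).hom w := by rw [he]

end Split

end Statement10
namespace Statement10

variable {k : Type} [Field k] {A : Type} [SmallCategory A] [Preadditive A]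
  [CategoryTheory.Linear k A]

section Yoneda

variable {n : ℕ} (x : Fin n → A)

/-- The canonical `i`-th generator of the sum of representables. -/
def delta (i : Fin n) : (sumReprR k A x).obj.obj (op (x i)) :=
  Pi.single i (𝟙 (x i))

lemma sumRepr_map_apply {y z : Aᵒᵖ} (f : y ⟶ z) (h : (sumReprR k A x).obj.obj y) (j : Fin n) :
    ((sumReprR k A x).obj.map f h) j = f.unop ≫ h j := rfl

lemma delta_same (j : Fin n) : delta (k := k) x j j = 𝟙 (x j) := by
  unfold delta; exact Pi.single_eq_same _ _

lemma delta_ne {i j : Fin n} (hij : i ≠ j) : delta (k := k) x i j = 0 := by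
  unfold delta; exact Pi.single_eq_of_ne (Ne.symm hij) _

lemma sum_decomp (y : Aᵒᵖ) (h : (sumReprR k A x).obj.obj y) :
    ∑ i, (sumReprR k A x).obj.map ((h i).op) (delta x i) = h := by
  funext j
  have : (∑ i, (sumReprR k A x).obj.map ((h i).op) (delta x i)) j
      = ∑ i, ((sumReprR k A x).obj.map ((h i).op) (delta x i)) j := by
    exact Finset.sum_apply _ _ _
  rw [this]
  have hterm : ∀ i, ((sumReprR k A x).obj.map ((h i).op) (delta x i)) j
      = h i ≫ delta (k := k) x i j := fun i => rfl
  simp only [hterm]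
  rw [Finset.sum_eq_single j]
  · rw [delta_same, Category.comp_id]
  · intro i _ hij
    rw [delta_ne x hij, Limits.comp_zero]
  · intro hj
    exact absurd (Finset.mem_univ j) hj

lemma sumRepr_hom_ext {Y : RMod k A} {η η' : sumReprR k A x ⟶ Y}
    (hs : ∀ i, (η.hom.app (op (x i))).hom (delta x i) = (η'.hom.app (op (x i))).hom (delta x i)) : η = η' := by
  apply hom_ext'
  intro y h
  rw [← sum_decomp x y h, map_sum, map_sum]
  refine Finset.sum_congr rfl (fun i _ => ?_)
  rw [nat_apply, nat_apply, hs i]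

/-- Evaluation of a morphism out of a sum of representables on the canonical generators. -/
def evalDelta (Y : RMod k A) : (sumReprR k A x ⟶ Y) →ₗ[k] (∀ i, Y.obj.obj (op (x i))) where
  toFun η := fun i => (η.hom.app (op (x i))).hom (delta x i)
  map_add' η η' := by funext i; rfl
  map_smul' r η := by funext i; rfl

lemma evalDelta_injective (Y : RMod k A) : Function.Injective (evalDelta x Y) := by
  intro η η' h
  exact sumRepr_hom_ext x (fun i => congrFun h i)

lemma findim_end (hfd : ∀ a b : A, FiniteDimensional k (a ⟶ b)) :
    FiniteDimensional k (sumReprR k A x ⟶ sumReprR k A x) := by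
  have hcomp : ∀ i, FiniteDimensional k ((sumReprR k A x).obj.obj (op (x i))) := by
    intro i
    haveI : ∀ j, FiniteDimensional k (x i ⟶ x j) := fun j => hfd _ _
    show FiniteDimensional k (∀ j, x i ⟶ x j)
    infer_instance
  haveI := hcomp
  exact FiniteDimensional.of_injective (evalDelta x _) (evalDelta_injective x _)

end Yoneda

end Statement10
namespace Statement10

variable {k : Type} [Field k] {A : Type} [SmallCategory A] [Preadditive A]
  [CategoryTheory.Linear k A]

section Quot

variable {X Y : RMod k A} (q : X ⟶ Y)

lemma range_le_comap {y z : Aᵒᵖ} (f : y ⟶ z) :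
    LinearMap.range ((q.hom.app y).hom) ≤ (LinearMap.range ((q.hom.app z).hom)).comap (Y.obj.map f).hom := by
  rintro v ⟨w, rfl⟩
  exact ⟨X.obj.map f w, nat_apply q f w⟩

/-- The quotient functor by the image of `q`. -/
def quotF : Aᵒᵖ ⥤ ModuleCat.{0} k where
  obj y := ModuleCat.of k (Y.obj.obj y ⧸ LinearMap.range ((q.hom.app y).hom))
  map {y z} f := ModuleCat.ofHom
    (Submodule.mapQ _ _ (Y.obj.map f).hom (range_le_comap q f))
  map_id y := by
    apply ModuleCat.hom_ext
    refine Submodule.linearMap_qext _ ?_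
    apply LinearMap.ext; intro v
    simp only [id_eq, LinearMap.comp_apply, Submodule.mkQ_apply, ModuleCat.ofHom,
      Submodule.mapQ_apply, Y.obj.map_id]
    rfl
  map_comp {y z w} f g := by
    apply ModuleCat.hom_ext
    refine Submodule.linearMap_qext _ ?_
    apply LinearMap.ext; intro v
    simp only [id_eq, LinearMap.comp_apply, Submodule.mkQ_apply, ModuleCat.ofHom,
      ModuleCat.hom_comp, Submodule.mapQ_apply, Y.obj.map_comp]
    rfl

lemma quotF_isKLinear : IsKLinear k (quotF q) := by
  obtain ⟨ha, hl⟩ := Y.property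
  have hAdd : (quotF q).Additive := by
    constructor
    intro y z f g
    apply ModuleCat.hom_ext
    refine Submodule.linearMap_qext _ ?_
    apply LinearMap.ext; intro v
    show Submodule.Quotient.mk (p := LinearMap.range ((q.hom.app z).hom)) ((Y.obj.map (f + g)) v)
      = Submodule.Quotient.mk (p := LinearMap.range ((q.hom.app z).hom)) ((Y.obj.map f) v) + Submodule.Quotient.mk (p := LinearMap.range ((q.hom.app z).hom)) ((Y.obj.map g) v)
    rw [ha.map_add]; exact Submodule.Quotient.mk_add _
  haveI := hAdd
  have hLin : Functor.Linear k (quotF q) := by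
    constructor
    intro y z f r
    apply ModuleCat.hom_ext
    refine Submodule.linearMap_qext _ ?_
    apply LinearMap.ext; intro v
    rw [ModuleCat.hom_smul]
    show Submodule.Quotient.mk (p := LinearMap.range ((q.hom.app z).hom)) ((Y.obj.map (r • f)) v) = r • Submodule.Quotient.mk (p := LinearMap.range ((q.hom.app z).hom)) ((Y.obj.map f) v)
    rw [hl.map_smul]; exact Submodule.Quotient.mk_smul (LinearMap.range ((q.hom.app z).hom)) r ((Y.obj.map f) v)
  exact ⟨hAdd, hLin⟩

/-- The quotient module. -/
def quotMod : RMod k A := ⟨quotF q, quotF_isKLinear q⟩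

/-- The quotient projection. -/
def quotProj : Y ⟶ quotMod q where
  hom.app y := ModuleCat.ofHom (LinearMap.range ((q.hom.app y).hom)).mkQ
  hom.naturality {y z} f := by
    apply ModuleCat.hom_ext; apply LinearMap.ext; intro v
    rfl

lemma epi_pointwise_surjective [Epi q] (y : Aᵒᵖ) : Function.Surjective ((q.hom.app y).hom) := by
  have h0 : q ≫ quotProj q = q ≫ 0 := by
    apply hom_ext'
    intro z v
    show (LinearMap.range ((q.hom.app z).hom)).mkQ ((q.hom.app z).hom v) = ((0 : X ⟶ quotMod q).hom.app z).hom v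
    rw [Submodule.mkQ_apply, (Submodule.Quotient.mk_eq_zero _).2 (LinearMap.mem_range_self ((q.hom.app z).hom) v)]
    rfl
  have hq0 : quotProj q = 0 := by
    haveI : Epi q := inferInstance
    exact (cancel_epi q).1 h0
  intro w
  have : (LinearMap.range ((q.hom.app y).hom)).mkQ w = 0 := by
    have e1 : ((quotProj q).hom.app y).hom w = ((0 : Y ⟶ quotMod q).hom.app y).hom w := by rw [hq0]
    exact e1
  rw [Submodule.mkQ_apply] at this
  exact (Submodule.Quotient.mk_eq_zero _).1 this

end Quot

end Statement10
namespace Statement10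

variable {k : Type} [Field k] {A : Type} [SmallCategory A] [Preadditive A]
  [CategoryTheory.Linear k A]

lemma projective_of_retract {C : Type*} [Category C] {P Q : C} (hQ : Projective Q)
    (r : Q ⟶ P) (s : P ⟶ Q) (hrs : s ≫ r = 𝟙 P) : Projective P := by
  constructor
  intro E Z f q hq
  obtain ⟨g, hg⟩ := hQ.factors (r ≫ f) q
  exact ⟨s ≫ g, by rw [Category.assoc, hg, ← Category.assoc, hrs, Category.id_comp]⟩

section Proj

variable {n : ℕ} (x : Fin n → A)

/-- The lifting morphism pointwise. -/
def liftApp {E : RMod k A} (ea : E.obj.Additive) (el : Functor.Linear k E.obj)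
    (w : ∀ i, E.obj.obj (op (x i))) (y : Aᵒᵖ) :
    (sumReprR k A x).obj.obj y →ₗ[k] E.obj.obj y where
  toFun h := ∑ i, E.obj.map ((h i).op) (w i)
  map_add' h h' := by
    rw [← Finset.sum_add_distrib]
    refine Finset.sum_congr rfl (fun i _ => ?_)
    have h1 : ((h + h') i).op = (h i).op + (h' i).op := rfl
    rw [h1, ea.map_add]
    rfl
  map_smul' r h := by
    simp only [RingHom.id_apply]
    rw [Finset.smul_sum]
    refine Finset.sum_congr rfl (fun i _ => ?_)
    have h1 : ((r • h) i).op = r • (h i).op := rfl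
    rw [h1, el.map_smul]
    rfl

lemma projective_sumReprR : Projective (sumReprR k A x) := by
  constructor
  intro E Z f q hq
  obtain ⟨ea, el⟩ := E.property
  have hsurj : ∀ i, ∃ w, (q.hom.app (op (x i))).hom w = (f.hom.app (op (x i))).hom (delta x i) :=
    fun i => epi_pointwise_surjective q (op (x i)) ((f.hom.app (op (x i))).hom (delta x i))
  choose w hw using hsurj
  refine ⟨⟨{ app := fun y => ModuleCat.ofHom (liftApp x ea el w y), naturality := ?_ }⟩, ?_⟩
  · -- naturality
    intro y z u
    apply ModuleCat.hom_ext; apply LinearMap.ext; intro h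
    show ∑ i, E.obj.map ((((sumReprR k A x).obj.map u h) i).op) (w i)
      = E.obj.map u (∑ i, E.obj.map ((h i).op) (w i))
    rw [map_sum]
    refine Finset.sum_congr rfl (fun i _ => ?_)
    have h1 : (((sumReprR k A x).obj.map u h) i).op = (h i).op ≫ u := by
      have : ((sumReprR k A x).obj.map u h) i = u.unop ≫ h i := rfl
      rw [this]
      rfl
    rw [h1, E.obj.map_comp]
    rfl
  · -- factorization
    apply hom_ext'
    intro y h
    show (q.hom.app y).hom (∑ i, E.obj.map ((h i).op) (w i)) = (f.hom.app y).hom h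
    rw [map_sum]
    have : ∀ i, (q.hom.app y).hom (E.obj.map ((h i).op) (w i))
        = (f.hom.app y).hom ((sumReprR k A x).obj.map ((h i).op) (delta x i)) := by
      intro i
      rw [nat_apply q ((h i).op) (w i), hw i, ← nat_apply f ((h i).op) (delta x i)]
    simp only [this]
    rw [← map_sum, sum_decomp]

end Proj

end Statement10
namespace Statement10

open Polynomial in
lemma exists_idem {k : Type} [Field k] {E : Type*} [Ring E] [Algebra k E] (g : E)
    (hg : IsIntegral k g) :
    IsUnit g ∨ ∃ (e' : E) (a : ℕ),
      e' * e' = e' ∧ e' * g ^ a = g ^ a ∧ g ^ a * e' = g ^ a ∧ (e' = 1 → IsUnit g) := by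
  obtain ⟨m, hmonic, hme⟩ := hg
  have hme' : aeval g m = 0 := by rw [aeval_def]; exact hme
  have hm0 : m ≠ 0 := hmonic.ne_zero
  obtain ⟨qq, hfac, hnd⟩ := m.exists_eq_pow_rootMultiplicity_mul_and_not_dvd hm0 0
  rw [map_zero, sub_zero] at hfac hnd
  set a := m.rootMultiplicity 0 with ha_def
  by_cases ha : a = 0
  · left
    have hq : m = qq := by rw [hfac, ha, pow_zero, one_mul]
    have hann : aeval g qq = 0 := by rw [← hq]; exact hme'
    have hc : qq.coeff 0 ≠ 0 := fun hc => hnd (X_dvd_iff.2 hc)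
    have key : g * aeval g (divX qq) + algebraMap k E (qq.coeff 0) = 0 := by
      have h2 := congrArg (aeval g) (X_mul_divX_add qq)
      rw [map_add, map_mul, aeval_X, aeval_C, hann] at h2
      exact h2
    set u := aeval g (divX qq) with hu
    have comm : g * u = u * g := by
      rw [hu]
      calc g * aeval g (divX qq) = aeval g (X * divX qq) := by rw [map_mul, aeval_X]
        _ = aeval g (divX qq * X) := by rw [mul_comm]
        _ = aeval g (divX qq) * g := by rw [map_mul, aeval_X]
    have hgu : g * u = -(algebraMap k E (qq.coeff 0)) := eq_neg_of_add_eq_zero_left key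
    have hsmul : (qq.coeff 0)⁻¹ • algebraMap k E (qq.coeff 0) = 1 := by
      rw [Algebra.algebraMap_eq_smul_one, smul_smul, inv_mul_cancel₀ hc, one_smul]
    refine isUnit_iff_exists.2 ⟨-(qq.coeff 0)⁻¹ • u, ?_, ?_⟩
    · rw [mul_smul_comm, hgu, smul_neg, neg_smul, neg_neg, hsmul]
    · rw [smul_mul_assoc, ← comm, hgu, smul_neg, neg_smul, neg_neg, hsmul]
  · right
    have hcop : IsCoprime ((X : k[X]) ^ a) qq :=
      (Polynomial.irreducible_X.coprime_iff_not_dvd.2 hnd).pow_left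
    obtain ⟨uu, vv, huv⟩ := hcop
    have hm : aeval g ((X : k[X]) ^ a * qq) = 0 := by rw [← hfac]; exact hme'
    set e' := aeval g (uu * X ^ a) with he'
    have h1 : e' + aeval g (vv * qq) = 1 := by rw [he', ← map_add, huv, map_one]
    have h2 : e' * aeval g (vv * qq) = 0 := by
      rw [he', ← map_mul]
      have : uu * X ^ a * (vv * qq) = uu * vv * (X ^ a * qq) := by ring
      rw [this, map_mul, hm, mul_zero]
    have h2' : aeval g (vv * qq) * e' = 0 := by
      rw [he', ← map_mul]
      have : vv * qq * (uu * X ^ a) = uu * vv * (X ^ a * qq) := by ring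
      rw [this, map_mul, hm, mul_zero]
    have hvq : aeval g (vv * qq) = 1 - e' := by
      rw [← h1, add_sub_cancel_left]
    have hidem : e' * e' = e' := by
      have := h2
      rw [hvq, mul_sub, mul_one, sub_eq_zero] at this
      exact this.symm
    have hpow : (g : E) ^ a = aeval g ((X : k[X]) ^ a) := by rw [map_pow, aeval_X]
    have hright : e' * g ^ a = g ^ a := by
      have h3 : (1 - e') * g ^ a = 0 := by
        rw [← hvq, hpow, ← map_mul]
        have : vv * qq * X ^ a = vv * (X ^ a * qq) := by ring
        rw [this, map_mul, hm, mul_zero]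
      rw [sub_mul, one_mul, sub_eq_zero] at h3
      exact h3.symm
    have hleft : g ^ a * e' = g ^ a := by
      have h3 : g ^ a * (1 - e') = 0 := by
        rw [← hvq, hpow, ← map_mul]
        have : (X : k[X]) ^ a * (vv * qq) = vv * (X ^ a * qq) := by ring
        rw [this, map_mul, hm, mul_zero]
      rw [mul_sub, mul_one, sub_eq_zero] at h3
      exact h3.symm
    refine ⟨e', a, hidem, hright, hleft, ?_⟩
    intro hone
    have haX : (X : k[X]) ^ a = X * X ^ (a - 1) := by
      conv_lhs => rw [← Nat.sub_add_cancel (Nat.one_le_iff_ne_zero.2 ha)]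
      rw [pow_succ]
      ring
    refine isUnit_iff_exists.2 ⟨aeval g (uu * X ^ (a - 1)), ?_, ?_⟩
    · have : g * aeval g (uu * X ^ (a - 1)) = aeval g (uu * X ^ a) := by
        calc g * aeval g (uu * X ^ (a - 1)) = aeval g (X * (uu * X ^ (a - 1))) := by
              conv_rhs => rw [map_mul, aeval_X]
          _ = aeval g (uu * X ^ a) := by rw [haX]; ring_nf
      rw [this, ← he', hone]
    · have : aeval g (uu * X ^ (a - 1)) * g = aeval g (uu * X ^ a) := by
        calc aeval g (uu * X ^ (a - 1)) * g = aeval g (uu * X ^ (a - 1) * X) := by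
              conv_rhs => rw [map_mul, aeval_X]
          _ = aeval g (uu * X ^ a) := by rw [haX]; ring_nf
      rw [this, ← he', hone]

section Conj

variable {k : Type} [Field k] {C : Type*} [Category C] [Preadditive C]
  [CategoryTheory.Linear k C]

/-- Conjugation by a pair of morphisms, as a linear map on endomorphism spaces. -/
def conj {X Y : C} (u : X ⟶ Y) (v : Y ⟶ X) : (Y ⟶ Y) →ₗ[k] (X ⟶ X) where
  toFun h := u ≫ h ≫ v
  map_add' h h' := by
    rw [Preadditive.add_comp, Preadditive.comp_add]
  map_smul' r h := by
    simp only [RingHom.id_apply]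
    rw [CategoryTheory.Linear.smul_comp, CategoryTheory.Linear.comp_smul]

lemma conj_apply {X Y : C} (u : X ⟶ Y) (v : Y ⟶ X) (h : Y ⟶ Y) :
    conj (k := k) u v h = u ≫ h ≫ v := rfl

lemma conj_inj {X Y : C} (u : X ⟶ Y) (v : Y ⟶ X) (hvu : v ≫ u = 𝟙 Y) :
    Function.Injective (conj (k := k) u v) := by
  intro h h' hh
  have key : ∀ h₀ : Y ⟶ Y, v ≫ (conj (k := k) u v h₀) ≫ u = h₀ := by
    intro h₀
    rw [conj_apply, Category.assoc, Category.assoc, hvu, Category.comp_id, ← Category.assoc,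
      hvu, Category.id_comp]
  rw [← key h, ← key h', hh]

end Conj

end Statement10
namespace Statement10

variable {k : Type} [Field k] {A : Type} [SmallCategory A] [Preadditive A]
  [CategoryTheory.Linear k A]

lemma pow_comp {C : Type*} [Category C] [Preadditive C] {X Y : C}
    (g : CategoryTheory.End X) (p : X ⟶ Y) (hgp : (g : X ⟶ X) ≫ p = p) (b : ℕ) :
    ((g ^ b : CategoryTheory.End X) : X ⟶ X) ≫ p = p := by
  induction b with
  | zero => rw [pow_zero]; exact Category.id_comp p
  | succ b ih =>
    rw [pow_succ]
    show (g ≫ ((g ^ b : CategoryTheory.End X) : X ⟶ X)) ≫ p = p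
    rw [Category.assoc, ih, hgp]

end Statement10

theorem statement_10'
    {k : Type} [Field k] {A : Type} [SmallCategory A] [Preadditive A]
    [CategoryTheory.Linear k A]
    (hfd : ∀ x y : A, FiniteDimensional k (x ⟶ y))
    (V : RMod k A) (hV : RMod.IsFG k A V) :
    ∃ (P : RMod k A) (p : P ⟶ V), RMod.IsFG k A P ∧ Projective P ∧ Epi p ∧
      ∃ (K : RMod k A) (ι : K ⟶ P), IsKernelOf ι p ∧ IsSuperfluous ι := by
  classical
  obtain ⟨n, x, p₀, hp₀⟩ := hV
  haveI hfdE0 : FiniteDimensional k (sumReprR k A x ⟶ sumReprR k A x) :=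
    Statement10.findim_end x hfd
  -- the set of idempotents with epi composite, and its minimizer
  set S : Set (sumReprR k A x ⟶ sumReprR k A x) :=
    {e | e ≫ e = e ∧ Epi (e ≫ p₀)} with hS_def
  have h1S : 𝟙 (sumReprR k A x) ∈ S :=
    ⟨by rw [Category.id_comp], by rw [Category.id_comp]; exact hp₀⟩
  obtain ⟨m, ⟨e, heS, hedm⟩, hmin⟩ :=
    (wellFounded_lt (α := ℕ)).has_min
      ((fun e => Module.finrank k
          (LinearMap.range (Statement10.conj (k := k) e e))) '' S)
      ⟨_, ⟨𝟙 _, h1S, rfl⟩⟩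
  have hmin' : ∀ e'' ∈ S,
      Module.finrank k (LinearMap.range (Statement10.conj (k := k) e e))
        ≤ Module.finrank k (LinearMap.range (Statement10.conj (k := k) e'' e'')) := by
    intro e'' h''
    have h1 := hmin _ ⟨e'', h'', rfl⟩
    rw [← hedm] at h1
    exact Nat.le_of_not_lt h1
  -- split the idempotent e
  set P : RMod k A := Statement10.imMod e with hP_def
  set ι' : P ⟶ sumReprR k A x := Statement10.imIncl e with hι'_def
  set π : sumReprR k A x ⟶ P := Statement10.imProj e with hπ_def
  have hπι : π ≫ ι' = e := Statement10.imProj_incl e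
  have hιπ : ι' ≫ π = 𝟙 P := Statement10.imIncl_proj e heS.1
  have hιπ_assoc : ∀ {W : RMod k A} (w : P ⟶ W), ι' ≫ π ≫ w = w := by
    intro W w
    rw [← Category.assoc, hιπ, Category.id_comp]
  set p : P ⟶ V := ι' ≫ p₀ with hp_def
  have heπp : e ≫ p₀ = π ≫ p := by rw [hp_def, ← Category.assoc, hπι]
  have hpepi : Epi p := by
    haveI : Epi (π ≫ p) := by rw [← heπp]; exact heS.2
    exact epi_of_epi π p
  have hπepi : Epi π := by
    haveI : Epi (ι' ≫ π) := by rw [hιπ]; infer_instance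
    exact epi_of_epi ι' π
  have hPfg : RMod.IsFG k A P := ⟨n, x, π, hπepi⟩
  have hPproj : Projective P :=
    Statement10.projective_of_retract (Statement10.projective_sumReprR x) π ι' hιπ
  haveI hfdP : FiniteDimensional k (P ⟶ P) :=
    FiniteDimensional.of_injective (Statement10.conj (k := k) π ι')
      (Statement10.conj_inj π ι' hιπ)
  refine ⟨P, p, hPfg, hPproj, hpepi, Statement10.kerMod p, Statement10.kerIncl p,
    Statement10.kerMod_isKernelOf p, ?_⟩
  -- superfluousness of the kernel
  intro T t ht hjoint
  have hιp : Statement10.kerIncl p ≫ p = 0 := (Statement10.kerMod_isKernelOf p).2.1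
  haveI htpepi : Epi (t ≫ p) := by
    constructor
    intro W u v huv
    have h1 : Statement10.kerIncl p ≫ (p ≫ u) = Statement10.kerIncl p ≫ (p ≫ v) := by
      rw [← Category.assoc, hιp, Limits.zero_comp, ← Category.assoc, hιp, Limits.zero_comp]
    have h2 : t ≫ (p ≫ u) = t ≫ (p ≫ v) := by
      rw [← Category.assoc, huv, Category.assoc]
    have h3 := hjoint W (p ≫ u) (p ≫ v) h1 h2
    haveI := hpepi
    exact (cancel_epi p).1 h3
  obtain ⟨f, hf⟩ := hPproj.factors p (t ≫ p)
  set gg : CategoryTheory.End P := f ≫ t with hgg_def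
  have hggp : (gg : P ⟶ P) ≫ p = p := by rw [hgg_def, Category.assoc, hf]
  haveI : Module.Finite k (CategoryTheory.End P) := hfdP
  have hInt : IsIntegral k gg := IsIntegral.of_finite k gg
  -- in either case, gg is a unit; this suffices
  suffices hUnit : IsUnit gg by
    obtain ⟨u, hgu⟩ := hUnit
    have hA : (gg : P ⟶ P) ≫ (u.inv : P ⟶ P) = 𝟙 P := by rw [← hgu]; exact u.inv_val
    have hB : (u.inv : P ⟶ P) ≫ (gg : P ⟶ P) = 𝟙 P := by rw [← hgu]; exact u.val_inv
    refine ⟨⟨(u.inv : P ⟶ P) ≫ f, ?_, ?_⟩⟩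
    · have hrt : ((u.inv : P ⟶ P) ≫ f) ≫ t = 𝟙 P := by
        rw [Category.assoc]
        show (u.inv : P ⟶ P) ≫ (gg : P ⟶ P) = 𝟙 P
        exact hB
      have h4 : t ≫ ((u.inv : P ⟶ P) ≫ f) ≫ t = 𝟙 T ≫ t := by
        rw [hrt, Category.comp_id, Category.id_comp]
      haveI := ht
      exact (cancel_mono t).1 h4
    · rw [Category.assoc]
      show (u.inv : P ⟶ P) ≫ (gg : P ⟶ P) = 𝟙 P
      exact hB
  rcases Statement10.exists_idem gg hInt with hunit | ⟨e', a, hidem, hrr, hll, hone⟩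
  · exact hunit
  -- idempotent case: minimality forces e' = 1
  have hgap : ((gg ^ a : CategoryTheory.End P) : P ⟶ P) ≫ p = p :=
    Statement10.pow_comp gg p hggp a
  have hidem' : (e' : P ⟶ P) ≫ (e' : P ⟶ P) = (e' : P ⟶ P) := hidem
  have hll' : (e' : P ⟶ P) ≫ ((gg ^ a : CategoryTheory.End P) : P ⟶ P)
      = ((gg ^ a : CategoryTheory.End P) : P ⟶ P) := hll
  have he'p : (e' : P ⟶ P) ≫ p = p := by
    calc (e' : P ⟶ P) ≫ p
        = (e' : P ⟶ P) ≫ (((gg ^ a : CategoryTheory.End P) : P ⟶ P) ≫ p) := by rw [hgap]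
      _ = ((e' : P ⟶ P) ≫ ((gg ^ a : CategoryTheory.End P) : P ⟶ P)) ≫ p := by
          rw [Category.assoc]
      _ = ((gg ^ a : CategoryTheory.End P) : P ⟶ P) ≫ p := by rw [hll']
      _ = p := hgap
  set et : sumReprR k A x ⟶ sumReprR k A x := π ≫ (e' : P ⟶ P) ≫ ι' with het_def
  have hetS : et ∈ S := by
    refine ⟨?_, ?_⟩
    · show (π ≫ (e' : P ⟶ P) ≫ ι') ≫ π ≫ (e' : P ⟶ P) ≫ ι' = π ≫ (e' : P ⟶ P) ≫ ι'
      calc (π ≫ (e' : P ⟶ P) ≫ ι') ≫ π ≫ (e' : P ⟶ P) ≫ ι'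
          = π ≫ (e' : P ⟶ P) ≫ (ι' ≫ π ≫ (e' : P ⟶ P) ≫ ι') := by
            simp only [Category.assoc]
        _ = π ≫ (e' : P ⟶ P) ≫ (e' : P ⟶ P) ≫ ι' := by rw [hιπ_assoc]
        _ = π ≫ ((e' : P ⟶ P) ≫ (e' : P ⟶ P)) ≫ ι' := by simp only [Category.assoc]
        _ = π ≫ (e' : P ⟶ P) ≫ ι' := by rw [hidem']
    · have h5 : et ≫ p₀ = e ≫ p₀ := by
        rw [het_def, heπp]
        calc (π ≫ (e' : P ⟶ P) ≫ ι') ≫ p₀ = π ≫ (e' : P ⟶ P) ≫ (ι' ≫ p₀) := by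
              simp only [Category.assoc]
          _ = π ≫ (e' : P ⟶ P) ≫ p := by rw [hp_def]
          _ = π ≫ p := by rw [he'p]
      show Epi (et ≫ p₀)
      rw [h5]
      exact heS.2
  -- dimension comparison via Ψ
  set Ψ : (P ⟶ P) →ₗ[k] (sumReprR k A x ⟶ sumReprR k A x) :=
    Statement10.conj (k := k) π ι' with hΨ_def
  have hΨinj : Function.Injective Ψ := Statement10.conj_inj π ι' hιπ
  have heπ : e ≫ π = π := by rw [← hπι, Category.assoc, hιπ, Category.comp_id]
  have hι'e : ι' ≫ e = ι' := by rw [← hπι, ← Category.assoc, hιπ, Category.id_comp]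
  have hrange_e : LinearMap.range (Statement10.conj (k := k) e e)
      = Submodule.map Ψ ⊤ := by
    apply le_antisymm
    · rintro _ ⟨f₀, rfl⟩
      refine ⟨ι' ≫ f₀ ≫ π, trivial, ?_⟩
      show π ≫ (ι' ≫ f₀ ≫ π) ≫ ι' = e ≫ f₀ ≫ e
      rw [← hπι]
      simp only [Category.assoc]
    · rintro _ ⟨h, -, rfl⟩
      refine ⟨Ψ h, ?_⟩
      show e ≫ (Ψ h) ≫ e = Ψ h
      rw [hΨ_def]
      show e ≫ (π ≫ h ≫ ι') ≫ e = π ≫ h ≫ ι'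
      calc e ≫ (π ≫ h ≫ ι') ≫ e = (e ≫ π) ≫ h ≫ (ι' ≫ e) := by simp only [Category.assoc]
        _ = π ≫ h ≫ ι' := by rw [heπ, hι'e]
  have hrange_et : LinearMap.range (Statement10.conj (k := k) et et)
      = Submodule.map Ψ (LinearMap.range
          (Statement10.conj (k := k) (e' : P ⟶ P) (e' : P ⟶ P))) := by
    apply le_antisymm
    · rintro _ ⟨f₀, rfl⟩
      refine ⟨(e' : P ⟶ P) ≫ (ι' ≫ f₀ ≫ π) ≫ (e' : P ⟶ P), ⟨ι' ≫ f₀ ≫ π, rfl⟩, ?_⟩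
      show π ≫ ((e' : P ⟶ P) ≫ (ι' ≫ f₀ ≫ π) ≫ (e' : P ⟶ P)) ≫ ι' = et ≫ f₀ ≫ et
      rw [het_def]
      simp only [Category.assoc]
    · rintro _ ⟨-, ⟨h, rfl⟩, rfl⟩
      refine ⟨Ψ h, ?_⟩
      show et ≫ (Ψ h) ≫ et = Ψ ((e' : P ⟶ P) ≫ h ≫ (e' : P ⟶ P))
      rw [hΨ_def, het_def]
      show (π ≫ (e' : P ⟶ P) ≫ ι') ≫ (π ≫ h ≫ ι') ≫ π ≫ (e' : P ⟶ P) ≫ ι'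
        = π ≫ ((e' : P ⟶ P) ≫ h ≫ (e' : P ⟶ P)) ≫ ι'
      simp only [Category.assoc, hιπ_assoc]
  have hle1 : Module.finrank k (P ⟶ P)
      ≤ Module.finrank k (LinearMap.range
          (Statement10.conj (k := k) (e' : P ⟶ P) (e' : P ⟶ P))) := by
    have h1 := hmin' et hetS
    rw [hrange_e, hrange_et,
      ← (Submodule.equivMapOfInjective Ψ hΨinj ⊤).finrank_eq,
      ← (Submodule.equivMapOfInjective Ψ hΨinj _).finrank_eq, finrank_top] at h1
    exact h1
  have hge1 : Module.finrank k (LinearMap.range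
      (Statement10.conj (k := k) (e' : P ⟶ P) (e' : P ⟶ P)))
      ≤ Module.finrank k (P ⟶ P) := Submodule.finrank_le _
  have htop : LinearMap.range (Statement10.conj (k := k) (e' : P ⟶ P) (e' : P ⟶ P)) = ⊤ :=
    Submodule.eq_top_of_finrank_eq (le_antisymm hge1 hle1)
  have hmem : 𝟙 P ∈ LinearMap.range
      (Statement10.conj (k := k) (e' : P ⟶ P) (e' : P ⟶ P)) := by
    rw [htop]; exact Submodule.mem_top
  obtain ⟨c, hc⟩ := hmem
  have hc' : (e' : P ⟶ P) ≫ c ≫ (e' : P ⟶ P) = 𝟙 P := hc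
  have he'1 : (e' : P ⟶ P) = 𝟙 P := by
    calc (e' : P ⟶ P) = (e' : P ⟶ P) ≫ 𝟙 P := (Category.comp_id _).symm
      _ = (e' : P ⟶ P) ≫ (e' : P ⟶ P) ≫ c ≫ (e' : P ⟶ P) := by rw [hc']
      _ = ((e' : P ⟶ P) ≫ (e' : P ⟶ P)) ≫ c ≫ (e' : P ⟶ P) := by
          simp only [Category.assoc]
      _ = (e' : P ⟶ P) ≫ c ≫ (e' : P ⟶ P) := by rw [hidem']
      _ = 𝟙 P := hc'
  exact hone he'1

/-!
STATEMENT 10: over a finite-dimensional category `A`, every finitely generated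
object `V` of `Mod-A` has a projective cover: a finitely generated projective `P`
and an epimorphism `p : P ⟶ V` whose kernel is a superfluous subobject of `P`.
-/
theorem statement_10
    (hfd : ∀ x y : A, FiniteDimensional k (x ⟶ y))
    (V : RMod k A) (hV : RMod.IsFG k A V) :
    ∃ (P : RMod k A) (p : P ⟶ V), RMod.IsFG k A P ∧ Projective P ∧ Epi p ∧
      ∃ (K : RMod k A) (ι : K ⟶ P), IsKernelOf ι p ∧ IsSuperfluous ι :=
  statement_10' hfd V hV

end
end

section
/- Let k be a field and m ≥ n ≥ 1. In the nil Hecke algebra NH_n ⊆ End_k(k[X_1,…,X_n]), the two-sided ideal generated by the operator m_{X_1^m} (multiplication by X_1^m) coincides with the two-sided ideal generated by the operators m_{h_r(X_1,…,X_n)} for m−n+1 ≤ r ≤ m, where h_r(X_1,…,X_n) denotes the complete homogeneous symmetric polynomial of degree r in X_1,…,X_n. -/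
/-!
STATEMENT 16: in the nil Hecke algebra `NH_n ⊆ End_k(k[X_1, …, X_n])`, the two-sided
ideal generated by `m_{X_1^m}` equals the two-sided ideal generated by the
multiplication operators by the complete homogeneous symmetric polynomials
`h_r(X_1, …, X_n)` for `m − n + 1 ≤ r ≤ m` (where `m ≥ n ≥ 1`).

Here `n ≥ 1` is realized as `n = ν + 1`, so the polynomial ring has `ν + 1`
variables indexed by `Fin (ν + 1)` and there are `ν` Demazure operators, which
are quantified via their defining property.
-/

open MvPolynomial

/-- The simple transposition `σ_i` interchanging `X_i` and `X_{i+1}`. -/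
noncomputable def simpleTransp {k : Type} [Field k] {ν : ℕ}
    (i : Fin ν) (f : MvPolynomial (Fin (ν + 1)) k) : MvPolynomial (Fin (ν + 1)) k :=
  rename (Equiv.swap i.castSucc i.succ) f

/-- `D` is the family of Demazure operators: `D i` is the unique `k`-linear map with
`(X_i − X_{i+1}) · D_i f = σ_i f − f`. -/
def IsDemazureFamily {k : Type} [Field k] {ν : ℕ}
    (D : Fin ν → Module.End k (MvPolynomial (Fin (ν + 1)) k)) : Prop :=
  ∀ (i : Fin ν) (f : MvPolynomial (Fin (ν + 1)) k),
    (X i.castSucc - X i.succ) * D i f = simpleTransp i f - f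

/-- The nil Hecke algebra: the subalgebra of `End_k(k[X_1, …, X_n])` generated by the
multiplication operators `m_{X_1}, …, m_{X_n}` and the Demazure operators. -/
noncomputable def nilHecke {k : Type} [Field k] {ν : ℕ}
    (D : Fin ν → Module.End k (MvPolynomial (Fin (ν + 1)) k)) :
    Subalgebra k (Module.End k (MvPolynomial (Fin (ν + 1)) k)) :=
  Algebra.adjoin k
    (Set.range (fun j : Fin (ν + 1) =>
        Algebra.lmul k (MvPolynomial (Fin (ν + 1)) k) (X j)) ∪ Set.range D)

/-- Multiplication by any polynomial lies in the nil Hecke algebra. -/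
lemma lmul_mem_nilHecke {k : Type} [Field k] {ν : ℕ}
    (D : Fin ν → Module.End k (MvPolynomial (Fin (ν + 1)) k))
    (g : MvPolynomial (Fin (ν + 1)) k) :
    Algebra.lmul k (MvPolynomial (Fin (ν + 1)) k) g ∈ nilHecke D := by
  have h1 : g ∈ Algebra.adjoin k (Set.range (X : Fin (ν + 1) → _)) := by
    rw [MvPolynomial.adjoin_range_X]; trivial
  have h2 : (Algebra.adjoin k (Set.range (X : Fin (ν + 1) → _))).map
      (Algebra.lmul k (MvPolynomial (Fin (ν + 1)) k)) ≤ nilHecke D := by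
    rw [AlgHom.map_adjoin]
    apply Algebra.adjoin_le
    rintro _ ⟨_, ⟨j, rfl⟩, rfl⟩
    exact Algebra.subset_adjoin (Or.inl ⟨j, rfl⟩)
  exact h2 ⟨g, h1, rfl⟩

/-! ### Auxiliary: an explicit recursive model of complete homogeneous polynomials -/

section hh
variable {A : Type*} [CommRing A]

/-- `hh L r` is the complete homogeneous "polynomial" of degree `r` in the
elements of the list `L`. -/
def hh : List A → ℕ → A
  | _, 0 => 1
  | [], _ + 1 => 0
  | a :: L, r + 1 => hh L (r + 1) + a * hh (a :: L) r
termination_by L r => (L.length, r)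

@[simp] lemma hh_zero (L : List A) : hh L 0 = 1 := by cases L <;> rw [hh]
@[simp] lemma hh_nil_succ (r : ℕ) : hh ([] : List A) (r+1) = 0 := by rw [hh]
lemma hh_cons_succ (a : A) (L : List A) (r : ℕ) :
    hh (a :: L) (r + 1) = hh L (r + 1) + a * hh (a :: L) r := by rw [hh]

lemma hh_map {B : Type*} [CommRing B] {F : Type*} [FunLike F A B] [RingHomClass F A B]
    (φ : F) (L : List A) (r : ℕ) : φ (hh L r) = hh (L.map φ) r := by
  induction L generalizing r with
  | nil => cases r <;> simp
  | cons a L ih =>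
    induction r with
    | zero => simp
    | succ r ihr => simp [hh_cons_succ, ih, ihr]

lemma hh_singleton (a : A) (r : ℕ) : hh [a] r = a ^ r := by
  induction r with
  | zero => simp
  | succ r ih => rw [hh_cons_succ, ih, hh_nil_succ, pow_succ]; ring

lemma hh_sub (a b : A) (L : List A) (r : ℕ) :
    hh (b :: L) (r + 1) - hh (a :: L) (r + 1) = (b - a) * hh (a :: b :: L) r := by
  induction r with
  | zero => simp [hh_cons_succ]
  | succ r ih =>
    rw [hh_cons_succ b L, hh_cons_succ a L, hh_cons_succ a (b :: L)]
    linear_combination a * ih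

lemma hh_swap (a b : A) (L : List A) (r : ℕ) : hh (a :: b :: L) r = hh (b :: a :: L) r := by
  induction r with
  | zero => simp
  | succ r ih =>
    rw [hh_cons_succ a (b :: L), hh_cons_succ b (a :: L)]
    linear_combination hh_sub a b L r + b * ih
end hh

/-! ### Bridge: `hsymm` equals `hh` applied to the list of all variables -/

section bridge
variable (R : Type*) [CommRing R]

lemma hsymm_option (σ : Type*) [Fintype σ] [DecidableEq σ] (r : ℕ) :
    hsymm (Option σ) R (r+1) =
      rename some (hsymm σ R (r+1)) + X none * hsymm (Option σ) R r := by
  have key : ∀ t : Sym (Option σ) r ⊕ Sym σ (r+1),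
      ((((symOptionSuccEquiv (α := σ) (n := r)).symm t : Sym (Option σ) (r+1)) :
          Multiset (Option σ)).map X).prod =
      (Sum.elim
        (fun s : Sym (Option σ) r =>
          X (none : Option σ) * (((s : Multiset (Option σ))).map X).prod)
        (fun s : Sym σ (r+1) =>
          rename (some : σ → Option σ) (((s : Multiset σ).map X).prod)) t :
        MvPolynomial (Option σ) R) := by
    rintro (s | s)
    · show (((none ::ₛ s : Sym (Option σ) (r+1)) : Multiset (Option σ)).map X).prod = _
      rw [Sym.coe_cons, Multiset.map_cons, Multiset.prod_cons]
      rfl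
    · show (((s.map Function.Embedding.some : Sym (Option σ) (r+1)) :
          Multiset (Option σ)).map X).prod = _
      rw [Sym.coe_map, Multiset.map_map]
      simp only [Sum.elim_inr]
      rw [map_multiset_prod, Multiset.map_map]
      congr 1
      apply Multiset.map_congr rfl
      intros; simp
  rw [hsymm]
  have hsum : (∑ s : Sym (Option σ) (r+1),
        (((s : Multiset (Option σ)).map X).prod : MvPolynomial (Option σ) R))
      = ∑ t : Sym (Option σ) r ⊕ Sym σ (r+1),
          (Sum.elim
            (fun s : Sym (Option σ) r =>
              X (none : Option σ) * (((s : Multiset (Option σ))).map X).prod)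
            (fun s : Sym σ (r+1) =>
              rename (some : σ → Option σ) (((s : Multiset σ).map X).prod)) t :
            MvPolynomial (Option σ) R) :=
    (Fintype.sum_equiv (symOptionSuccEquiv (α := σ) (n := r)).symm _ _
      (fun t => (key t).symm)).symm
  refine hsum.trans ?_
  rw [Fintype.sum_sum_type]
  simp only [Sum.elim_inl, Sum.elim_inr]
  rw [hsymm, hsymm, map_sum, Finset.mul_sum, add_comm]
  rfl

lemma hsymm_eq_hh : ∀ (n r : ℕ),
    hsymm (Fin n) R r = hh (((List.finRange n).reverse).map X) r := by
  intro n
  induction n with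
  | zero =>
    intro r
    cases r with
    | zero => simp
    | succ r =>
      have : IsEmpty (Sym (Fin 0) (r+1)) := by
        constructor
        rintro ⟨s, hs⟩
        rcases Multiset.empty_or_exists_mem s with h | ⟨a, _⟩
        · rw [h] at hs; simp at hs
        · exact a.elim0
      simp [hsymm, List.finRange]
  | succ n ihn =>
    intro r
    induction r with
    | zero => simp
    | succ r ihr =>
      have h1 : hsymm (Fin (n+1)) R (r+1) =
          rename (Fin.castSucc) (hsymm (Fin n) R (r+1)) +
            X (Fin.last n) * hsymm (Fin (n+1)) R r := by
        have h0 := congrArg (rename (finSuccEquivLast (n := n)).symm)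
          (hsymm_option R (Fin n) r)
        rw [rename_hsymm] at h0
        rw [h0, map_add, map_mul, rename_rename, rename_hsymm, rename_X,
          finSuccEquivLast_symm_none,
          show (⇑(finSuccEquivLast (n := n)).symm ∘ some) = Fin.castSucc from
            funext fun i => finSuccEquivLast_symm_some i]
      rw [h1, ihn, ihr]
      have hl : List.map X (List.finRange (n+1)).reverse
          = X (Fin.last n) :: List.map
              (fun i : Fin n => (X i.castSucc : MvPolynomial (Fin (n+1)) R))
              (List.finRange n).reverse := by
        rw [List.finRange_succ_last, List.reverse_append]
        simp [List.map_reverse, Function.comp_def]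
      rw [hl, hh_cons_succ, ← hl]
      congr 1
      have h2 := hh_map ((rename (Fin.castSucc : Fin n → Fin (n+1)) :
          MvPolynomial (Fin n) R →ₐ[R] MvPolynomial (Fin (n+1)) R) :
            MvPolynomial (Fin n) R →+* MvPolynomial (Fin (n+1)) R)
        ((List.finRange n).reverse.map X) (r+1)
      rw [List.map_map] at h2
      simpa [Function.comp_def] using h2
end bridge

/-! ### Multiplication operators and the ideal closure under Demazure operators -/

section main
variable {k : Type} [Field k] {ν : ℕ}

/-- `m_g` as an element of the nil Hecke algebra. -/
noncomputable def Mf (D : Fin ν → Module.End k (MvPolynomial (Fin (ν + 1)) k))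
    (g : MvPolynomial (Fin (ν + 1)) k) : nilHecke D :=
  ⟨Algebra.lmul k (MvPolynomial (Fin (ν + 1)) k) g, lmul_mem_nilHecke D g⟩

lemma Mf_mul (D : Fin ν → Module.End k (MvPolynomial (Fin (ν + 1)) k))
    (f g : MvPolynomial (Fin (ν + 1)) k) : Mf D (f * g) = Mf D f * Mf D g :=
  Subtype.ext (map_mul (Algebra.lmul k _) f g)

lemma Mf_sub (D : Fin ν → Module.End k (MvPolynomial (Fin (ν + 1)) k))
    (f g : MvPolynomial (Fin (ν + 1)) k) : Mf D (f - g) = Mf D f - Mf D g :=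
  Subtype.ext (map_sub (Algebra.lmul k _) f g)

lemma Mf_neg (D : Fin ν → Module.End k (MvPolynomial (Fin (ν + 1)) k))
    (f : MvPolynomial (Fin (ν + 1)) k) : Mf D (-f) = - Mf D f :=
  Subtype.ext (map_neg (Algebra.lmul k _) f)

lemma Mf_apply (D : Fin ν → Module.End k (MvPolynomial (Fin (ν + 1)) k))
    (g f : MvPolynomial (Fin (ν + 1)) k) :
    ((Mf D g : nilHecke D) : Module.End k (MvPolynomial (Fin (ν + 1)) k)) f = g * f := by
  simp [Mf, Algebra.coe_lmul_eq_mul, LinearMap.mul_apply']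

lemma st_mul (i : Fin ν) (f g : MvPolynomial (Fin (ν + 1)) k) :
    simpleTransp i (f * g) = simpleTransp i f * simpleTransp i g :=
  map_mul (rename _) f g

lemma st_st (i : Fin ν) (f : MvPolynomial (Fin (ν + 1)) k) :
    simpleTransp i (simpleTransp i f) = f := by
  unfold simpleTransp
  rw [rename_rename]
  rw [show (⇑(Equiv.swap i.castSucc i.succ) ∘ ⇑(Equiv.swap i.castSucc i.succ)) = id by
    funext x; simp [Equiv.swap_apply_self]]
  rw [rename_id, AlgHom.id_apply]

lemma xdiff_ne (i : Fin ν) :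
    (X i.castSucc - X i.succ : MvPolynomial (Fin (ν + 1)) k) ≠ 0 :=
  sub_ne_zero_of_ne fun h =>
    (Fin.castSucc_lt_succ : i.castSucc < i.succ).ne (MvPolynomial.X_injective h)

lemma leibniz {D : Fin ν → Module.End k (MvPolynomial (Fin (ν + 1)) k)}
    (hD : IsDemazureFamily D) (i : Fin ν) (f g : MvPolynomial (Fin (ν + 1)) k) :
    D i (f * g) = D i f * g + simpleTransp i f * D i g := by
  apply mul_left_cancel₀ (xdiff_ne i)
  have e1 := hD i (f * g)
  have e2 := hD i f
  have e3 := hD i g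
  have e4 := st_mul i f g
  linear_combination e1 + e4 - g * e2 - simpleTransp i f * e3

lemma mem_of_neg_mem {R : Type*} [Ring R] (I : TwoSidedIdeal R) {x : R}
    (h : -x ∈ I) : x ∈ I := by
  have := I.neg_mem h
  rwa [neg_neg] at this

lemma D_mem_nilHecke (D : Fin ν → Module.End k (MvPolynomial (Fin (ν + 1)) k))
    (i : Fin ν) : D i ∈ nilHecke D :=
  Algebra.subset_adjoin (Or.inr ⟨i, rfl⟩)

lemma demazure_mem {D : Fin ν → Module.End k (MvPolynomial (Fin (ν + 1)) k)}
    (hD : IsDemazureFamily D) (I : TwoSidedIdeal ↥(nilHecke D))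
    {f : MvPolynomial (Fin (ν + 1)) k} (hf : Mf D f ∈ I) (i : Fin ν) :
    Mf D (D i f) ∈ I := by
  set Dd : ↥(nilHecke D) := ⟨D i, D_mem_nilHecke D i⟩ with hDd
  set S : ↥(nilHecke D) := 1 + Mf D (X i.castSucc - X i.succ) * Dd with hS
  have hSapp : ∀ g, ((S : Module.End k (MvPolynomial (Fin (ν + 1)) k))) g
      = simpleTransp i g := by
    intro g
    have h0 : ((S : Module.End k (MvPolynomial (Fin (ν + 1)) k))) g
        = g + (X i.castSucc - X i.succ) * (D i g) := by
      rw [hS]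
      simp only [AddMemClass.coe_add, OneMemClass.coe_one, MulMemClass.coe_mul,
        LinearMap.add_apply, Module.End.one_apply, Module.End.mul_apply]
      rw [Mf_apply]
    rw [h0, hD i g]; ring
  have keyEq : Mf D (D i f) = Dd * Mf D f - S * Mf D f * (S * Dd) := by
    apply Subtype.ext
    apply LinearMap.ext
    intro g
    simp only [AddSubgroupClass.coe_sub, MulMemClass.coe_mul, LinearMap.sub_apply,
      Module.End.mul_apply]
    rw [Mf_apply, Mf_apply, hSapp, hSapp]
    show D i f * g = D i (f * g) - simpleTransp i (f * simpleTransp i (D i g))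
    rw [st_mul, st_st, leibniz hD i f g]
    ring
  rw [keyEq]
  exact I.sub_mem (I.mul_mem_left Dd _ hf)
    (I.mul_mem_right _ (S * Dd) (I.mul_mem_left S _ hf))
end main

/-! ### Lists of initial variables -/

section Ml
variable (k : Type) [Field k] (ν : ℕ)

/-- The list `[X_{j-1}, …, X_1, X_0]`. -/
noncomputable def Ml (j : ℕ) : List (MvPolynomial (Fin (ν + 1)) k) :=
  ((List.finRange (ν + 1)).take j).reverse.map X

lemma Ml_zero : Ml k ν 0 = [] := by simp [Ml]

lemma Ml_succ {j : ℕ} (h : j < ν + 1) : Ml k ν (j + 1) = X ⟨j, h⟩ :: Ml k ν j := by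
  unfold Ml
  rw [List.take_succ]
  rw [show (List.finRange (ν + 1))[j]? = some ⟨j, h⟩ by
    rw [List.getElem?_eq_getElem (by simpa using h)]
    simp]
  simp

lemma Ml_top : Ml k ν (ν + 1) = (List.finRange (ν + 1)).reverse.map X := by
  unfold Ml
  rw [List.take_of_length_le (by simp)]

lemma mem_take_finRange {n j : ℕ} {a : Fin n} (ha : a ∈ (List.finRange n).take j) :
    (a : ℕ) < j := by
  rw [List.mem_iff_getElem] at ha
  obtain ⟨s, hs, rfl⟩ := ha
  have hs' : s < j := by
    simpa using lt_of_lt_of_le hs (by simp)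
  simp [List.getElem_take, List.getElem_finRange]
  omega

lemma st_Ml (i : Fin ν) {j : ℕ} (hj : j ≤ (i : ℕ)) :
    (Ml k ν j).map (rename (Equiv.swap i.castSucc i.succ)) = Ml k ν j := by
  unfold Ml
  rw [List.map_map]
  apply List.map_congr_left
  intro a ha
  rw [List.mem_reverse] at ha
  have hv := mem_take_finRange ha
  simp only [Function.comp_apply, rename_X]
  rw [Equiv.swap_apply_of_ne_of_ne]
  · exact Fin.ne_of_val_ne (by simp; omega)
  · exact Fin.ne_of_val_ne (by simp [Fin.val_succ]; omega)
end Ml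

lemma Ml_one (k : Type) [Field k] (ν : ℕ) : Ml k ν 1 = [X (0 : Fin (ν + 1))] := by
  have h01 := Ml_succ k ν (j := 0) (by omega)
  rw [Ml_zero] at h01
  rw [show (⟨0, by omega⟩ : Fin (ν + 1)) = 0 from Fin.ext (by simp)] at h01
  exact h01

lemma D_hh {k : Type} [Field k] {ν : ℕ}
    {D : Fin ν → Module.End k (MvPolynomial (Fin (ν + 1)) k)}
    (hD : IsDemazureFamily D) (i : Fin ν) (r : ℕ) :
    D i (hh (Ml k ν ((i : ℕ) + 1)) (r + 1)) = - hh (Ml k ν ((i : ℕ) + 2)) r := by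
  have h1 : Ml k ν ((i : ℕ) + 1) = X i.castSucc :: Ml k ν (i : ℕ) := by
    rw [Ml_succ k ν (show (i : ℕ) < ν + 1 by omega)]
    congr 1
  have h2 : Ml k ν ((i : ℕ) + 2) = X i.succ :: X i.castSucc :: Ml k ν (i : ℕ) := by
    rw [show ((i : ℕ) + 2) = ((i : ℕ) + 1) + 1 from rfl,
      Ml_succ k ν (show (i : ℕ) + 1 < ν + 1 by omega), h1]
    congr 1
  apply mul_left_cancel₀ (xdiff_ne i)
  rw [hD i]
  have h3 : simpleTransp i (hh (Ml k ν ((i : ℕ) + 1)) (r + 1))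
      = hh (X i.succ :: Ml k ν (i : ℕ)) (r + 1) := by
    unfold simpleTransp
    rw [hh_map (F := MvPolynomial (Fin (ν + 1)) k →ₐ[k] MvPolynomial (Fin (ν + 1)) k)
      (rename (Equiv.swap i.castSucc i.succ)), h1, List.map_cons,
      st_Ml k ν i le_rfl, rename_X, Equiv.swap_apply_left]
  rw [h3, h1, h2, hh_sub (X i.castSucc) (X i.succ) (Ml k ν (i : ℕ)) r, hh_swap]
  ring

set_option maxHeartbeats 1000000 in
set_option synthInstance.maxHeartbeats 1000000 in
theorem statement_16 {k : Type} [Field k] {ν : ℕ} {m : ℕ} (hm : ν + 1 ≤ m)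
    (D : Fin ν → Module.End k (MvPolynomial (Fin (ν + 1)) k))
    (hD : IsDemazureFamily D) :
    TwoSidedIdeal.span
        {(⟨Algebra.lmul k (MvPolynomial (Fin (ν + 1)) k) (X 0 ^ m),
            by simpa using lmul_mem_nilHecke D (X 0 ^ m)⟩ : nilHecke D)} =
      TwoSidedIdeal.span
        ((fun r : ℕ =>
            (⟨Algebra.lmul k (MvPolynomial (Fin (ν + 1)) k)
                (MvPolynomial.hsymm (Fin (ν + 1)) k r),
              lmul_mem_nilHecke D _⟩ : nilHecke D)) ''
          (Set.Icc (m - (ν + 1) + 1) m)) := by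
  set I := TwoSidedIdeal.span
      {(⟨Algebra.lmul k (MvPolynomial (Fin (ν + 1)) k) (X 0 ^ m),
          by simpa using lmul_mem_nilHecke D (X 0 ^ m)⟩ : nilHecke D)} with hI
  set J := TwoSidedIdeal.span
      ((fun r : ℕ =>
          (⟨Algebra.lmul k (MvPolynomial (Fin (ν + 1)) k)
              (MvPolynomial.hsymm (Fin (ν + 1)) k r),
            lmul_mem_nilHecke D _⟩ : nilHecke D)) ''
        (Set.Icc (m - (ν + 1) + 1) m)) with hJ
  have hbridge : ∀ r, MvPolynomial.hsymm (Fin (ν + 1)) k r = hh (Ml k ν (ν + 1)) r := by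
    intro r
    rw [Ml_top, hsymm_eq_hh]
  have hgen1 : (⟨Algebra.lmul k (MvPolynomial (Fin (ν + 1)) k) (X 0 ^ m),
      by simpa using lmul_mem_nilHecke D (X 0 ^ m)⟩ : nilHecke D)
      = Mf D (X 0 ^ m) := rfl
  have hgen2 : ∀ r : ℕ, (⟨Algebra.lmul k (MvPolynomial (Fin (ν + 1)) k)
      (MvPolynomial.hsymm (Fin (ν + 1)) k r),
        lmul_mem_nilHecke D _⟩ : nilHecke D) = Mf D (hh (Ml k ν (ν + 1)) r) := by
    intro r
    exact Subtype.ext (by rw [hbridge r]; rfl)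
  apply le_antisymm
  · -- I ≤ J : express X 0 ^ m via the h's
    have claim2 : ∀ d, d ≤ ν → ∀ r, m ≤ r + (ν - d) → r ≤ m →
        Mf D (hh (Ml k ν (ν + 1 - d)) r) ∈ J := by
      intro d
      induction d with
      | zero =>
        intro _ r h1 h2
        apply TwoSidedIdeal.subset_span
        exact ⟨r, Set.mem_Icc.mpr ⟨by omega, h2⟩, hgen2 r⟩
      | succ d ihd =>
        intro hd r h1 h2
        have hr1 : 1 ≤ r := by omega
        obtain ⟨r', rfl⟩ : ∃ r', r = r' + 1 := ⟨r - 1, by omega⟩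
        set j : ℕ := ν - d - 1 with hjdef
        have e1 : ν + 1 - (d + 1) = j + 1 := by omega
        have e2 : ν + 1 - d = j + 2 := by omega
        rw [e1]
        have hcons : Ml k ν (j + 2) = X ⟨j + 1, by omega⟩ :: Ml k ν (j + 1) :=
          Ml_succ k ν (by omega)
        have hrec : Mf D (hh (Ml k ν (j + 1)) (r' + 1))
            = Mf D (hh (Ml k ν (j + 2)) (r' + 1))
              - Mf D (X ⟨j + 1, by omega⟩) * Mf D (hh (Ml k ν (j + 2)) r') := by
          rw [← Mf_mul, ← Mf_sub]
          congr 1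
          rw [hcons, hh_cons_succ, ← hcons]
          ring
        rw [hrec]
        have m1 := ihd (by omega) (r' + 1) (by omega) (by omega)
        have m2 := ihd (by omega) r' (by omega) (by omega)
        rw [e2] at m1 m2
        exact J.sub_mem m1 (J.mul_mem_left _ _ m2)
    have hXm : Mf D (X 0 ^ m) = Mf D (hh (Ml k ν 1) m) := by
      rw [Ml_one, hh_singleton]
    rw [TwoSidedIdeal.le_iff]
    intro x hx
    rw [SetLike.mem_coe, hI, TwoSidedIdeal.mem_span_iff] at hx
    apply hx J
    intro y hy
    rw [Set.mem_singleton_iff] at hy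
    subst hy
    rw [SetLike.mem_coe, hgen1, hXm]
    have := claim2 ν le_rfl m (by omega) le_rfl
    rwa [show ν + 1 - ν = 1 by omega] at this
  · -- J ≤ I : the h's are obtained from X 0 ^ m by Demazure operators
    have claim1 : ∀ j, j ≤ ν → ∀ r, m ≤ r + j → Mf D (hh (Ml k ν (j + 1)) r) ∈ I := by
      intro j
      induction j with
      | zero =>
        intro _ r hr
        rw [show Ml k ν (0 + 1) = [X (0 : Fin (ν + 1))] from Ml_one k ν, hh_singleton,
          show (X (0 : Fin (ν + 1)) : MvPolynomial (Fin (ν + 1)) k) ^ r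
            = X 0 ^ (r - m) * X 0 ^ m by rw [← pow_add]; congr 1; omega,
          Mf_mul]
        exact I.mul_mem_left _ _ (TwoSidedIdeal.subset_span rfl)
      | succ j ihj =>
        intro hj r hr
        have hi : j < ν := by omega
        have h0 := ihj (by omega) (r + 1) (by omega)
        have h1 := demazure_mem hD I h0 (⟨j, hi⟩ : Fin ν)
        rw [show (D (⟨j, hi⟩ : Fin ν)) (hh (Ml k ν (j + 1)) (r + 1))
            = - hh (Ml k ν (j + 2)) r from D_hh hD ⟨j, hi⟩ r, Mf_neg] at h1
        exact mem_of_neg_mem I h1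
    rw [TwoSidedIdeal.le_iff]
    intro x hx
    rw [SetLike.mem_coe, hJ, TwoSidedIdeal.mem_span_iff] at hx
    apply hx I
    rintro y ⟨r, hr, rfl⟩
    rw [Set.mem_Icc] at hr
    rw [SetLike.mem_coe]
    have := claim1 ν le_rfl r (by omega)
    rwa [← hgen2 r] at this
end
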